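/- Let N ∈ ℕ and a_1,…,a_N be real numbers with Σ_{ν=1}^N a_ν ν² = 1 and Σ_{ν=1}^N a_ν ν^{2m} = 0 for m = 2,…,N. Define A(θ) := 2 Σ_{ν=1}^N a_ν (1 - cos(νθ)). Then A(θ) > 0 for all θ ∈ (0,π]. -/

import Mathlib

open Real Finset

/-- `Qp m x = ∏_{j=1}^m (x² - j²)`. -/
noncomputable def Qp (m : ℕ) (x : ℝ) : ℝ := ∏ j ∈ Finset.Icc 1 m, (x^2 - (j:ℝ)^2)

lemma Qp_succ (m : ℕ) (y : ℝ) : Qp (m+1) y = Qp m y * (y^2 - ((m:ℝ)+1)^2) := by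
  rw [Qp, Qp, Finset.prod_Icc_succ_top (by omega)]
  push_cast; ring

lemma Qp_shift (m : ℕ) (x : ℝ) :
    (x - m) * ((x+1) * Qp m (x+1)) = (x + m + 1) * (x * Qp m x) := by
  induction m with
  | zero => simp [Qp]; ring
  | succ m ih =>
      rw [Qp_succ, Qp_succ]
      push_cast
      linear_combination (x - m - 1) * (x + m + 2) * ih

lemma G_rec (m : ℕ) (x : ℝ) :
    (x+1)^2 * Qp (m+1) (x+1) - 2*(x^2 * Qp (m+1) x) + (x-1)^2 * Qp (m+1) (x-1)
      = (2*((m:ℝ)+2)*(2*m+3)) * (x^2 * Qp m x) := by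
  have S1 := Qp_shift m x
  have S2 := Qp_shift m (x-1)
  rw [show x - 1 + 1 = x by ring] at S2
  rw [Qp_succ, Qp_succ, Qp_succ]
  linear_combination (x+1)*(x+m+2) * S1 - (x-1)*(x-m-2) * S2

/-- coefficients of `1 - cos(νθ)` in powers of `2(1-cosθ)`. -/
noncomputable def wc (ν k : ℕ) : ℝ :=
  if k = 0 then 0 else
    (-1)^(k-1) * ((ν:ℝ)^2 * Qp (k-1) ν) / ((2*k).factorial : ℝ)

lemma wc_zero (ν : ℕ) : wc ν 0 = 0 := by simp [wc]

lemma wc_one (ν : ℕ) : wc ν 1 = (ν:ℝ)^2 / 2 := by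
  norm_num [wc, Qp]

lemma wc_eq_zero {ν k : ℕ} (h : ν < k) : wc ν k = 0 := by
  rcases Nat.eq_zero_or_pos k with hk | hk
  · simp [hk, wc_zero]
  rcases Nat.eq_zero_or_pos ν with hν | hν
  · simp [wc, hν]
  · have : Qp (k-1) (ν:ℝ) = 0 := by
      apply Finset.prod_eq_zero (i := ν)
      · simp [Finset.mem_Icc]; omega
      · ring
    simp [wc, this]

lemma wc_rec (ν k : ℕ) :
    wc (ν+2) k = 2 * wc (ν+1) k - wc ν k - wc (ν+1) (k-1)
      + (if k = 1 then 1 else 0) := by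
  match k with
  | 0 => simp [wc_zero]
  | 1 =>
      simp only [wc_one, show (1:ℕ)-1 = 0 from rfl, wc_zero, if_pos rfl]
      push_cast; ring
  | (j+2) =>
      have hF : (((2*(j+1)).factorial : ℕ) : ℝ) ≠ 0 := by
        exact_mod_cast Nat.factorial_ne_zero _
      have h23 : (2*(j:ℝ)+3) ≠ 0 := by positivity
      have h24 : (2*(j:ℝ)+4) ≠ 0 := by positivity
      have hfac : (((2*(j+2)).factorial : ℕ) : ℝ)
          = (2*(j:ℝ)+4)*(2*(j:ℝ)+3)*(((2*(j+1)).factorial : ℕ) : ℝ) := by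
        have h : 2*(j+2) = (2*(j+1)+1)+1 := by omega
        rw [h, Nat.factorial_succ, Nat.factorial_succ]
        push_cast; ring
      have G := G_rec j ((ν:ℝ)+1)
      rw [show (ν:ℝ)+1+1 = ((ν:ℝ)+2) by ring, show (ν:ℝ)+1-1 = (ν:ℝ) by ring] at G
      simp only [wc, if_neg (show ¬(j+2=0) by omega), if_neg (show ¬(j+1=0) by omega),
        if_neg (show ¬(j+2=1) by omega), show j+2-1 = j+1 from rfl,
        show j+1-1 = j from rfl]
      push_cast
      rw [hfac]
      field_simp
      linear_combination ((-1:ℝ))^(j+1) * G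

lemma trig_id : ∀ ν M : ℕ, ν ≤ M → ∀ θ : ℝ,
    1 - Real.cos (ν * θ)
      = ∑ k ∈ Finset.range (M+1), wc ν k * (2*(1 - Real.cos θ))^k := by
  intro ν
  induction ν using Nat.twoStepInduction with
  | zero =>
      intro M _ θ
      rw [Nat.cast_zero, zero_mul, Real.cos_zero, Finset.sum_eq_zero]
      · ring
      intro k _
      rcases Nat.eq_zero_or_pos k with h | h
      · simp [h, wc_zero]
      · simp [wc_eq_zero h]
  | one =>
      intro M hM θ
      rw [Finset.sum_eq_single 1]
      · simp [wc_one]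
      · intro k hk hk1
        rcases Nat.eq_zero_or_pos k with h | h
        · simp [h, wc_zero]
        · have : 1 < k := by omega
          simp [wc_eq_zero this]
      · intro h; exact absurd (Finset.mem_range.mpr (by omega)) h
  | more ν ih ih1 =>
      intro M hM θ
      have hνM : ν ≤ M := by omega
      have hν1M : ν + 1 ≤ M := by omega
      have e0 := ih M hνM θ
      have e1 := ih1 M hν1M θ
      set s : ℝ := 2*(1 - Real.cos θ) with hs
      have key : Real.cos ((ν+2 : ℕ) * θ) + Real.cos ((ν:ℕ) * θ)
          = 2 * Real.cos (((ν+1 : ℕ)) * θ) * Real.cos θ := by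
        have h1 : ((ν+2 : ℕ) : ℝ) * θ = ((ν+1 : ℕ) : ℝ) * θ + θ := by push_cast; ring
        have h2 : ((ν : ℕ) : ℝ) * θ = ((ν+1 : ℕ) : ℝ) * θ - θ := by push_cast; ring
        rw [h1, h2, Real.cos_add, Real.cos_sub]; ring
      have hite : ∑ k ∈ Finset.range (M+1), (if k = 1 then (1:ℝ) else 0) * s^k = s := by
        rw [Finset.sum_eq_single 1]
        · simp
        · intro k _ hk1; simp [hk1]
        · intro h; exact absurd (Finset.mem_range.mpr (by omega)) h
      have hrec : ∑ k ∈ Finset.range (M+1), wc (ν+2) k * s^k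
          = 2 * (∑ k ∈ Finset.range (M+1), wc (ν+1) k * s^k)
            - (∑ k ∈ Finset.range (M+1), wc ν k * s^k)
            - (∑ k ∈ Finset.range (M+1), wc (ν+1) (k-1) * s^k)
            + s := by
        calc ∑ k ∈ Finset.range (M+1), wc (ν+2) k * s^k
            = ∑ k ∈ Finset.range (M+1),
                (2 * (wc (ν+1) k * s^k) - wc ν k * s^k - wc (ν+1) (k-1) * s^k
                  + (if k = 1 then (1:ℝ) else 0) * s^k) := by
              apply Finset.sum_congr rfl
              intro k _
              rw [wc_rec]; ring
          _ = _ := by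
              rw [Finset.sum_add_distrib, Finset.sum_sub_distrib, Finset.sum_sub_distrib,
                hite, ← Finset.mul_sum]
      have hshift : ∑ k ∈ Finset.range (M+1), wc (ν+1) (k-1) * s^k
          = s * ∑ k ∈ Finset.range (M+1), wc (ν+1) k * s^k := by
        rw [Finset.mul_sum, Finset.sum_range_succ' (fun k => wc (ν+1) (k-1) * s^k) M,
          Finset.sum_range_succ (fun k => s * (wc (ν+1) k * s^k)) M]
        simp only [Nat.add_sub_cancel, Nat.zero_sub, wc_zero, zero_mul, pow_zero,
          add_zero, wc_eq_zero (show ν+1 < M by omega), mul_zero]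
        apply Finset.sum_congr rfl
        intro k _; ring
      rw [hrec, hshift, ← e0, ← e1]
      have hc2 : Real.cos ((ν+2 : ℕ) * θ)
          = 2 * Real.cos (((ν+1 : ℕ)) * θ) * Real.cos θ - Real.cos ((ν:ℕ) * θ) := by
        linarith [key]
      rw [hc2, hs]
      ring

open Polynomial in
lemma moment_sum (N : ℕ) (a : Fin N → ℝ)
    (h1 : ∑ ν : Fin N, a ν * ((ν : ℕ) + 1 : ℝ) ^ 2 = 1)
    (hm : ∀ m : ℕ, 2 ≤ m → m ≤ N → ∑ ν : Fin N, a ν * ((ν : ℕ) + 1 : ℝ) ^ (2 * m) = 0)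
    (k : ℕ) (hk1 : 1 ≤ k) (hkN : k ≤ N) :
    ∑ ν : Fin N, a ν * wc ((ν:ℕ)+1) k
      = (∏ j ∈ Finset.Icc 1 (k-1), ((j:ℝ))^2) / ((2*k).factorial : ℝ) := by
  set q : ℝ[X] := ∏ j ∈ Finset.Icc 1 (k-1), (X - C ((j:ℝ)^2)) with hq
  have hqdeg : q.natDegree ≤ k - 1 := by
    apply le_trans (Polynomial.natDegree_prod_le _ _)
    apply le_trans (Finset.sum_le_card_nsmul _ _ 1 ?_)
    · simp [Nat.card_Icc]
    · intro j _; exact Polynomial.natDegree_X_sub_C_le _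
  have hpdeg : (X * q).natDegree < k + 1 := by
    calc (X * q).natDegree ≤ X.natDegree + q.natDegree := natDegree_mul_le
      _ ≤ 1 + (k-1) := by
          have : (X : ℝ[X]).natDegree = 1 := natDegree_X
          omega
      _ < k + 1 := by omega
  have hqeval : ∀ x : ℝ, q.eval (x^2) = Qp (k-1) x := by
    intro x
    rw [hq, Polynomial.eval_prod, Qp]
    exact Finset.prod_congr rfl (fun j _ => by simp)
  have hwc : ∀ ν : ℕ, wc (ν+1) k
      = (-1)^(k-1) * (X * q).eval (((ν:ℝ)+1)^2) / ((2*k).factorial : ℝ) := by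
    intro ν
    rw [wc, if_neg (by omega)]
    rw [Polynomial.eval_mul, Polynomial.eval_X, hqeval ((ν:ℝ)+1)]
    push_cast
    ring
  have hmain : ∑ ν : Fin N, a ν * (X * q).eval ((((ν:ℕ):ℝ)+1)^2) = (X*q).coeff 1 := by
    have heval : ∀ ν : Fin N, (X * q).eval ((((ν:ℕ):ℝ)+1)^2)
        = ∑ m ∈ Finset.range (k+1), (X*q).coeff m * ((((ν:ℕ):ℝ)+1)^2)^m :=
      fun ν => Polynomial.eval_eq_sum_range' hpdeg _
    calc ∑ ν : Fin N, a ν * (X * q).eval ((((ν:ℕ):ℝ)+1)^2)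
        = ∑ ν : Fin N, ∑ m ∈ Finset.range (k+1),
            (X*q).coeff m * (a ν * (((ν:ℕ):ℝ)+1)^(2*m)) := by
          apply Finset.sum_congr rfl
          intro ν _
          rw [heval ν, Finset.mul_sum]
          apply Finset.sum_congr rfl
          intro m _
          rw [← pow_mul, mul_comm 2 m, pow_mul]
          ring
      _ = ∑ m ∈ Finset.range (k+1),
            (X*q).coeff m * ∑ ν : Fin N, a ν * (((ν:ℕ):ℝ)+1)^(2*m) := by
          rw [Finset.sum_comm]
          exact Finset.sum_congr rfl (fun m _ => by rw [Finset.mul_sum])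
      _ = (X*q).coeff 1 := by
          rw [Finset.sum_eq_single 1]
          · norm_num
            rw [h1, mul_one]
          · intro m hmr hm1
            rcases Nat.eq_zero_or_pos m with h0 | h0
            · subst h0
              simp [Polynomial.mul_coeff_zero]
            · have h2 : 2 ≤ m := by omega
              have hmN : m ≤ N := by
                have := Finset.mem_range.mp hmr; omega
              rw [hm m h2 hmN, mul_zero]
          · intro h; exact absurd (Finset.mem_range.mpr (by omega)) h
  have hcard : (Finset.Icc 1 (k-1)).card = k - 1 := by
    rw [Nat.card_Icc]; omega
  have hcoeff1 : (X*q).coeff 1 = (-1)^(k-1) * ∏ j ∈ Finset.Icc 1 (k-1), ((j:ℝ))^2 := by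
    rw [show (1:ℕ) = 0 + 1 from rfl, Polynomial.coeff_X_mul,
      Polynomial.coeff_zero_eq_eval_zero, hq, Polynomial.eval_prod]
    calc ∏ j ∈ Finset.Icc 1 (k-1), Polynomial.eval 0 (X - C ((j:ℝ)^2))
        = ∏ j ∈ Finset.Icc 1 (k-1), ((-1) * ((j:ℝ))^2) := by
          exact Finset.prod_congr rfl (fun j _ => by simp)
      _ = (-1)^(k-1) * ∏ j ∈ Finset.Icc 1 (k-1), ((j:ℝ))^2 := by
          rw [Finset.prod_mul_distrib, Finset.prod_const, hcard]
  have hone : ((-1:ℝ))^(k-1) * ((-1:ℝ))^(k-1) = 1 := by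
    rw [← pow_add]
    exact Even.neg_one_pow ⟨k-1, by ring⟩
  calc ∑ ν : Fin N, a ν * wc ((ν:ℕ)+1) k
      = ((-1)^(k-1) / ((2*k).factorial : ℝ))
          * ∑ ν : Fin N, a ν * (X * q).eval ((((ν:ℕ):ℝ)+1)^2) := by
        rw [Finset.mul_sum]
        apply Finset.sum_congr rfl
        intro ν _
        rw [hwc (ν:ℕ)]
        ring
    _ = _ := by
        rw [hmain, hcoeff1]
        field_simp
        linear_combination (∏ j ∈ Finset.Icc 1 (k-1), ((j:ℝ))^2) * hone

theorem symbol_pos (N : ℕ) (hN : 0 < N) (a : Fin N → ℝ)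
    (h1 : ∑ ν : Fin N, a ν * ((ν : ℕ) + 1 : ℝ) ^ 2 = 1)
    (hm : ∀ m : ℕ, 2 ≤ m → m ≤ N → ∑ ν : Fin N, a ν * ((ν : ℕ) + 1 : ℝ) ^ (2 * m) = 0)
    (θ : ℝ) (hθ : θ ∈ Set.Ioc 0 π) :
    0 < 2 * ∑ ν : Fin N, a ν * (1 - Real.cos (((ν : ℕ) + 1) * θ)) := by
  obtain ⟨hθ0, hθπ⟩ := hθ
  have hcos : Real.cos θ < 1 := by
    have := Real.strictAntiOn_cos (Set.mem_Icc.mpr ⟨le_refl 0, Real.pi_pos.le⟩)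
      (Set.mem_Icc.mpr ⟨hθ0.le, hθπ⟩) hθ0
    simpa using this
  set s : ℝ := 2*(1 - Real.cos θ) with hs
  have hspos : 0 < s := by rw [hs]; linarith
  -- rewrite each summand via the trig identity
  have hterm : ∀ ν : Fin N, 1 - Real.cos (((ν:ℕ) + 1) * θ)
      = ∑ k ∈ Finset.range (N+1), wc ((ν:ℕ)+1) k * s^k := by
    intro ν
    have := trig_id ((ν:ℕ)+1) N (by omega) θ
    rw [hs]
    rw [← this]
    push_cast
    ring_nf
  have hsum : ∑ ν : Fin N, a ν * (1 - Real.cos (((ν:ℕ) + 1) * θ))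
      = ∑ k ∈ Finset.range (N+1), (∑ ν : Fin N, a ν * wc ((ν:ℕ)+1) k) * s^k := by
    calc ∑ ν : Fin N, a ν * (1 - Real.cos (((ν:ℕ) + 1) * θ))
        = ∑ ν : Fin N, ∑ k ∈ Finset.range (N+1), a ν * wc ((ν:ℕ)+1) k * s^k := by
          apply Finset.sum_congr rfl
          intro ν _
          rw [hterm ν, Finset.mul_sum]
          exact Finset.sum_congr rfl (fun k _ => by ring)
      _ = _ := by
          rw [Finset.sum_comm]
          apply Finset.sum_congr rfl
          intro k _
          rw [Finset.sum_mul]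
  rw [hsum]
  have hposterm : ∀ k ∈ Finset.range (N+1),
      0 ≤ (∑ ν : Fin N, a ν * wc ((ν:ℕ)+1) k) * s^k := by
    intro k hk
    rcases Nat.eq_zero_or_pos k with h0 | h0
    · simp [h0, wc_zero]
    · rw [moment_sum N a h1 hm k h0 (by exact Nat.lt_succ_iff.mp (Finset.mem_range.mp hk))]
      have hnum : (0:ℝ) ≤ ∏ j ∈ Finset.Icc 1 (k-1), ((j:ℝ))^2 :=
        Finset.prod_nonneg (fun j _ => sq_nonneg _)
      positivity
  have h1mem : 1 ∈ Finset.range (N+1) := Finset.mem_range.mpr (by omega)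
  have h1pos : 0 < (∑ ν : Fin N, a ν * wc ((ν:ℕ)+1) 1) * s^1 := by
    rw [moment_sum N a h1 hm 1 le_rfl hN]
    simp
    positivity
  have : 0 < ∑ k ∈ Finset.range (N+1), (∑ ν : Fin N, a ν * wc ((ν:ℕ)+1) k) * s^k :=
    Finset.sum_pos' hposterm ⟨1, h1mem, h1pos⟩
  linarith
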